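/- Maximum-degree upper bound on boxicity: let G be a finite simple graph with maximum degree Δ. Then the boxicity of G is at most Δ² + 2. -/

import Mathlib

set_option linter.unusedSectionVars false
set_option maxHeartbeats 1000000


/-- A simple graph `G` is an interval graph if each vertex can be assigned a nonempty
closed real interval `[a v, b v]` such that two distinct vertices are adjacent
iff their intervals intersect. -/
def IsIntervalGraph {V : Type*} (G : SimpleGraph V) : Prop :=
  ∃ a b : V → ℝ, (∀ v, a v ≤ b v) ∧
    ∀ u v : V, u ≠ v →
      (G.Adj u v ↔ (Set.Icc (a u) (b u) ∩ Set.Icc (a v) (b v)).Nonempty)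

/-- The boxicity of a simple graph `G`: the least `m` such that `G` is the
edge-intersection of `m` interval graphs on the same vertex set.  The empty
intersection (`m = 0`) is the complete graph `⊤`, so complete graphs have
boxicity `0`. -/
noncomputable def boxicity {V : Type*} (G : SimpleGraph V) : ℕ :=
  sInf {m : ℕ | ∃ I : Fin m → SimpleGraph V,
    (∀ k, IsIntervalGraph (I k)) ∧ G = ⨅ k, I k}


namespace BoxicityProof


open Finset

variable {V : Type*} [Fintype V] [DecidableEq V] (G : SimpleGraph V) [DecidableRel G.Adj]

/-- distinct vertices with a common neighbor -/
def D2 (a b : V) : Prop := a ≠ b ∧ ∃ w, G.Adj w a ∧ G.Adj w b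

instance : DecidableRel (D2 G) := fun _ _ => by unfold D2; infer_instance

lemma d2_symm {a b : V} (h : D2 G a b) : D2 G b a :=
  ⟨h.1.symm, h.2.imp fun _ hw => ⟨hw.2, hw.1⟩⟩

lemma d2_card_le (v : V) :
    (univ.filter fun w => D2 G v w).card ≤ G.maxDegree * (G.maxDegree - 1) := by
  have hsub : (univ.filter fun w => D2 G v w) ⊆
      (G.neighborFinset v).biUnion fun x => (G.neighborFinset x).erase v := by
    intro w hw
    simp only [mem_filter, mem_univ, true_and] at hw
    obtain ⟨hne, x, hxv, hxw⟩ := hw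
    refine mem_biUnion.2 ⟨x, ?_, ?_⟩
    · exact (G.mem_neighborFinset v x).2 hxv.symm
    · exact mem_erase.2 ⟨hne.symm, (G.mem_neighborFinset x w).2 hxw⟩
  calc (univ.filter fun w => D2 G v w).card
      ≤ ((G.neighborFinset v).biUnion fun x => (G.neighborFinset x).erase v).card :=
        card_le_card hsub
    _ ≤ ∑ x ∈ G.neighborFinset v, ((G.neighborFinset x).erase v).card := card_biUnion_le
    _ ≤ ∑ _x ∈ G.neighborFinset v, (G.maxDegree - 1) := by
        refine sum_le_sum fun x hx => ?_
        have hv : v ∈ G.neighborFinset x :=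
          (G.mem_neighborFinset x v).2 ((G.mem_neighborFinset v x).1 hx).symm
        rw [card_erase_of_mem hv]
        exact Nat.sub_le_sub_right (G.degree_le_maxDegree x) 1
    _ = (G.degree v) * (G.maxDegree - 1) := by
        rw [sum_const, smul_eq_mul]; rfl
    _ ≤ G.maxDegree * (G.maxDegree - 1) :=
        Nat.mul_le_mul_right _ (G.degree_le_maxDegree v)

/-- pair weight: 4 for an edge, 1 for a (nonadjacent) common-neighbor pair -/
def wt (u w : V) : ℕ := if G.Adj u w then 4 else if D2 G u w then 1 else 0

lemma wt_symm (u w : V) : wt G u w = wt G w u := by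
  unfold wt
  have h1 : G.Adj u w ↔ G.Adj w u := ⟨fun h => h.symm, fun h => h.symm⟩
  have h2 : D2 G u w ↔ D2 G w u := ⟨fun h => d2_symm G h, fun h => d2_symm G h⟩
  simp only [h1, h2]

lemma wt_total_le (v : V) :
    ∑ w ∈ univ.erase v, wt G v w ≤ 4 * G.maxDegree + G.maxDegree * (G.maxDegree - 1) := by
  have h1 : ∀ w ∈ univ.erase v, wt G v w ≤
      (if G.Adj v w then 4 else 0) + (if D2 G v w then 1 else 0) := by
    intro w _
    unfold wt
    by_cases h : G.Adj v w
    · simp [h]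
    · by_cases h2 : D2 G v w <;> simp [h, h2]
  have h2 : (∑ w ∈ univ.erase v, if G.Adj v w then (4:ℕ) else 0) ≤ 4 * G.maxDegree := by
    rw [← sum_filter, sum_const, smul_eq_mul]
    have : ((univ.erase v).filter fun w => G.Adj v w) ⊆ G.neighborFinset v := by
      intro w hw
      simp only [mem_filter] at hw
      exact (G.mem_neighborFinset v w).2 hw.2
    calc ((univ.erase v).filter fun w => G.Adj v w).card * 4
        ≤ G.degree v * 4 := Nat.mul_le_mul_right _ (card_le_card this)
      _ ≤ G.maxDegree * 4 := Nat.mul_le_mul_right _ (G.degree_le_maxDegree v)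
      _ = 4 * G.maxDegree := Nat.mul_comm _ _
  have h3 : (∑ w ∈ univ.erase v, if D2 G v w then (1:ℕ) else 0)
      ≤ G.maxDegree * (G.maxDegree - 1) := by
    rw [← sum_filter, sum_const, smul_eq_mul, Nat.mul_one]
    refine le_trans (card_le_card ?_) (d2_card_le G v)
    intro w hw
    simp only [mem_filter, mem_univ, true_and] at hw ⊢
    exact hw.2
  calc ∑ w ∈ univ.erase v, wt G v w
      ≤ ∑ w ∈ univ.erase v, ((if G.Adj v w then 4 else 0) + (if D2 G v w then 1 else 0)) :=
        sum_le_sum h1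
    _ = (∑ w ∈ univ.erase v, if G.Adj v w then 4 else 0)
        + (∑ w ∈ univ.erase v, if D2 G v w then 1 else 0) := sum_add_distrib
    _ ≤ 4 * G.maxDegree + G.maxDegree * (G.maxDegree - 1) := Nat.add_le_add h2 h3



section Potential

variable {V : Type*} [Fintype V] [DecidableEq V]
variable {ι : Type*} [Fintype ι] [DecidableEq ι]
variable (g : V → V → ℕ)

/-- total same-label weight -/
def pot (c : V → ι) : ℕ := ∑ u, ∑ w, if c u = c w then g u w else 0

/-- weight from `v` into label class `i` (excluding `v`) -/
def Wv (c : V → ι) (v : V) (i : ι) : ℕ :=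
  ∑ w ∈ univ.erase v, if c w = i then g v w else 0

lemma pot_split (hg : ∀ u w, g u w = g w u) (hg0 : ∀ u, g u u = 0) (c : V → ι) (v : V) :
    pot g c = (∑ u ∈ univ.erase v, ∑ w ∈ univ.erase v, if c u = c w then g u w else 0)
      + 2 * Wv g c v (c v) := by
  have hF : ∀ u, (∑ w, if c u = c w then g u w else 0)
      = (∑ w ∈ univ.erase v, if c u = c w then g u w else 0)
        + (if c u = c v then g u v else 0) :=
    fun u => (sum_erase_add univ _ (mem_univ v)).symm
  have h1 : pot g c = (∑ u ∈ univ.erase v, ∑ w, if c u = c w then g u w else 0)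
      + (∑ w, if c v = c w then g v w else 0) :=
    (sum_erase_add univ _ (mem_univ v)).symm
  rw [h1, hF v]
  have h2 : (∑ u ∈ univ.erase v, ∑ w, if c u = c w then g u w else 0)
      = (∑ u ∈ univ.erase v, ∑ w ∈ univ.erase v, if c u = c w then g u w else 0)
        + ∑ u ∈ univ.erase v, (if c u = c v then g u v else 0) := by
    rw [← sum_add_distrib]
    exact sum_congr rfl fun u _ => hF u
  rw [h2]
  have h3 : (∑ u ∈ univ.erase v, if c u = c v then g u v else 0) = Wv g c v (c v) := by
    refine sum_congr rfl fun u hu => ?_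
    rw [hg u v]
  have h4 : (∑ w ∈ univ.erase v, if c v = c w then g v w else 0) = Wv g c v (c v) := by
    refine sum_congr rfl fun w hw => ?_
    by_cases h : c w = c v
    · rw [if_pos h, if_pos h.symm]
    · rw [if_neg h, if_neg fun h' => h h'.symm]
  rw [h3, h4]
  have h5 : (if c v = c v then g v v else 0) = 0 := by rw [if_pos rfl, hg0]
  rw [h5]
  ring

lemma pot_update (hg : ∀ u w, g u w = g w u) (hg0 : ∀ u, g u u = 0) (c : V → ι) (v : V) (j : ι) :
    pot g (Function.update c v j) + 2 * Wv g c v (c v)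
      = pot g c + 2 * Wv g c v j := by
  set c' := Function.update c v j with hc'
  have hrest : (∑ u ∈ univ.erase v, ∑ w ∈ univ.erase v, if c' u = c' w then g u w else 0)
      = (∑ u ∈ univ.erase v, ∑ w ∈ univ.erase v, if c u = c w then g u w else 0) := by
    refine sum_congr rfl fun u hu => sum_congr rfl fun w hw => ?_
    rw [hc', Function.update_of_ne (mem_erase.1 hu).1, Function.update_of_ne (mem_erase.1 hw).1]
  have hW : ∀ i, Wv g c' v i = Wv g c v i := by
    intro i
    refine sum_congr rfl fun w hw => ?_
    rw [hc', Function.update_of_ne (mem_erase.1 hw).1]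
  have hcv : c' v = j := Function.update_self v j c
  rw [pot_split g hg hg0 c' v, pot_split g hg hg0 c v, hrest, hW, hcv]
  ring

lemma wv_min (hg : ∀ u w, g u w = g w u) (hg0 : ∀ u, g u u = 0) (c : V → ι) (hopt : ∀ c' : V → ι, pot g c ≤ pot g c') (v : V) (j : ι) :
    Wv g c v (c v) ≤ Wv g c v j := by
  have h := hopt (Function.update c v j)
  have h2 := pot_update g hg hg0 c v j
  omega

lemma sum_wv (c : V → ι) (v : V) : ∑ i, Wv g c v i = ∑ w ∈ univ.erase v, g v w := by
  unfold Wv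
  rw [sum_comm]
  refine sum_congr rfl fun w _ => ?_
  simpa using sum_ite_eq univ (c w) (fun _ => g v w)

lemma card_mul_wv_le (hg : ∀ u w, g u w = g w u) (hg0 : ∀ u, g u u = 0) (c : V → ι) (hopt : ∀ c' : V → ι, pot g c ≤ pot g c') (v : V) :
    (Fintype.card ι) * Wv g c v (c v) ≤ ∑ w ∈ univ.erase v, g v w := by
  have h1 : (univ : Finset ι).card • Wv g c v (c v) ≤ ∑ i, Wv g c v i :=
    card_nsmul_le_sum univ _ _ fun i _ => wv_min g hg hg0 c hopt v i
  rw [sum_wv] at h1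
  simpa [Finset.card_univ] using h1

end Potential


section Apply
variable {V : Type*} [Fintype V] [DecidableEq V] (G : SimpleGraph V) [DecidableRel G.Adj]



lemma exists_partition (k : ℕ)
    (hk : 4 * G.maxDegree + G.maxDegree * (G.maxDegree - 1) < 4 * k) :
    ∃ (c : V → Fin k) (s : V → Bool),
      (∀ v w, w ≠ v → c w = c v → ¬G.Adj v w) ∧
      (∀ v, ((univ.erase v).filter fun w => c w = c v ∧ s w = s v ∧ D2 G v w).card ≤ 1) := by
  have hk0 : 0 < k := by omega
  haveI : Nonempty (Fin k) := ⟨⟨0, hk0⟩⟩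
  obtain ⟨c, -, hc⟩ := exists_min_image (univ : Finset (V → Fin k)) (pot (wt G)) univ_nonempty
  have hopt : ∀ c' : V → Fin k, pot (wt G) c ≤ pot (wt G) c' := fun c' => hc c' (mem_univ c')
  have hgs : ∀ u w, wt G u w = wt G w u := wt_symm G
  have hg0 : ∀ u, wt G u u = 0 := by
    intro u
    unfold wt
    rw [if_neg (G.irrefl), if_neg (fun h : D2 G u u => h.1 rfl)]
  have hW3 : ∀ v, Wv (wt G) c v (c v) ≤ 3 := by
    intro v
    have h1 := card_mul_wv_le (wt G) hgs hg0 c hopt v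
    rw [Fintype.card_fin] at h1
    have h2 := wt_total_le G v
    by_contra hlt
    push_neg at hlt
    have h3 : k * 4 ≤ k * Wv (wt G) c v (c v) := Nat.mul_le_mul_left k hlt
    omega
  -- part independence
  have hP1 : ∀ v w, w ≠ v → c w = c v → ¬G.Adj v w := by
    intro v w hwv hcw hadj
    have hmem : w ∈ univ.erase v := mem_erase.2 ⟨hwv, mem_univ w⟩
    have h4 : (if c w = c v then wt G v w else 0) ≤ Wv (wt G) c v (c v) := by
      unfold Wv
      exact single_le_sum (f := fun w => if c w = c v then wt G v w else 0)
        (fun _ _ => Nat.zero_le _) hmem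
    rw [if_pos hcw] at h4
    have h5 : wt G v w = 4 := by unfold wt; rw [if_pos hadj]
    have := hW3 v
    omega
  -- same-part D2 count ≤ 3
  have hP2 : ∀ v, ((univ.erase v).filter fun w => c w = c v ∧ D2 G v w).card ≤ 3 := by
    intro v
    have hsum : ((univ.erase v).filter fun w => c w = c v ∧ D2 G v w).card
        ≤ Wv (wt G) c v (c v) := by
      have h6 : ∀ w ∈ (univ.erase v).filter fun w => c w = c v ∧ D2 G v w,
          1 ≤ (if c w = c v then wt G v w else 0) := by
        intro w hw
        rw [mem_filter] at hw
        rw [if_pos hw.2.1]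
        unfold wt
        by_cases h : G.Adj v w
        · rw [if_pos h]; omega
        · rw [if_neg h, if_pos hw.2.2]
      calc ((univ.erase v).filter fun w => c w = c v ∧ D2 G v w).card
          = ((univ.erase v).filter fun w => c w = c v ∧ D2 G v w).card • 1 := by
            rw [smul_eq_mul, Nat.mul_one]
        _ ≤ ∑ w ∈ (univ.erase v).filter fun w => c w = c v ∧ D2 G v w,
              (if c w = c v then wt G v w else 0) := card_nsmul_le_sum _ _ _ h6
        _ ≤ ∑ w ∈ univ.erase v, (if c w = c v then wt G v w else 0) :=
            sum_le_sum_of_subset (filter_subset _ _)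
        _ = Wv (wt G) c v (c v) := rfl
    exact le_trans hsum (hW3 v)
  -- second minimization: sides
  set g2 : V → V → ℕ := fun u w => if c u = c w ∧ D2 G u w then 1 else 0 with hg2
  have hg2s : ∀ u w, g2 u w = g2 w u := by
    intro u w
    show (if c u = c w ∧ D2 G u w then (1:ℕ) else 0) = (if c w = c u ∧ D2 G w u then (1:ℕ) else 0)
    by_cases h : c u = c w ∧ D2 G u w
    · rw [if_pos h, if_pos ⟨h.1.symm, d2_symm G h.2⟩]
    · rw [if_neg h, if_neg (fun h' => h ⟨h'.1.symm, d2_symm G h'.2⟩)]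
  have hg20 : ∀ u, g2 u u = 0 := by
    intro u
    show (if c u = c u ∧ D2 G u u then (1:ℕ) else 0) = 0
    exact if_neg (fun h => h.2.1 rfl)
  obtain ⟨s, -, hs⟩ := exists_min_image (univ : Finset (V → Bool)) (pot g2) univ_nonempty
  have hsopt : ∀ s' : V → Bool, pot g2 s ≤ pot g2 s' := fun s' => hs s' (mem_univ s')
  have hW1 : ∀ v, Wv g2 s v (s v) ≤ 1 := by
    intro v
    have h1 := card_mul_wv_le g2 hg2s hg20 s hsopt v
    have hcard : Fintype.card Bool = 2 := by simp
    rw [hcard] at h1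
    have h2 : (∑ w ∈ univ.erase v, g2 v w)
        ≤ ((univ.erase v).filter fun w => c w = c v ∧ D2 G v w).card := by
      rw [card_filter]
      refine sum_le_sum fun w _ => ?_
      show (if c v = c w ∧ D2 G v w then (1:ℕ) else 0) ≤ _
      by_cases h : c v = c w ∧ D2 G v w
      · rw [if_pos h, if_pos ⟨h.1.symm, h.2⟩]
      · rw [if_neg h]
        exact Nat.zero_le _
    have h3 := hP2 v
    omega
  refine ⟨c, s, hP1, fun v => ?_⟩
  have hsub : ((univ.erase v).filter fun w => c w = c v ∧ s w = s v ∧ D2 G v w).card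
      ≤ Wv g2 s v (s v) := by
    have h6 : ∀ w ∈ (univ.erase v).filter fun w => c w = c v ∧ s w = s v ∧ D2 G v w,
        1 ≤ (if s w = s v then g2 v w else 0) := by
      intro w hw
      rw [mem_filter] at hw
      rw [if_pos hw.2.2.1]
      show (1:ℕ) ≤ if c v = c w ∧ D2 G v w then 1 else 0
      rw [if_pos ⟨hw.2.1.symm, hw.2.2.2⟩]
    calc ((univ.erase v).filter fun w => c w = c v ∧ s w = s v ∧ D2 G v w).card
        = ((univ.erase v).filter fun w => c w = c v ∧ s w = s v ∧ D2 G v w).card • 1 := by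
          rw [smul_eq_mul, Nat.mul_one]
      _ ≤ ∑ w ∈ (univ.erase v).filter fun w => c w = c v ∧ s w = s v ∧ D2 G v w,
            (if s w = s v then g2 v w else 0) := card_nsmul_le_sum _ _ _ h6
      _ ≤ ∑ w ∈ univ.erase v, (if s w = s v then g2 v w else 0) :=
          sum_le_sum_of_subset (filter_subset _ _)
      _ = Wv g2 s v (s v) := rfl
  exact le_trans hsub (hW1 v)

end Apply



section Construction

variable {k : ℕ} (c : V → Fin k) (s : V → Bool)

/-- the (≤1 element) set of same-class same-side distance-2 partners -/
def Dset (v : V) : Finset V :=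
  (univ.erase v).filter fun w => c w = c v ∧ s w = s v ∧ D2 G v w

lemma mem_Dset_symm {v w : V} (h : w ∈ Dset G c s v) : v ∈ Dset G c s w := by
  simp only [Dset, mem_filter, mem_erase, mem_univ, true_and, and_true] at h ⊢
  obtain ⟨hne, h1, h2, h3⟩ := h
  exact ⟨hne.symm, h1.symm, h2.symm, d2_symm G h3⟩

/-- index of a vertex -/
noncomputable def ivx (v : V) : ℤ := ((Fintype.equivFin V v : ℕ) : ℤ)

lemma ivx_inj {v w : V} (h : ivx v = ivx w) : v = w := by
  unfold ivx at h
  exact (Fintype.equivFin V).injective (Fin.val_injective (by exact_mod_cast h))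

lemma ivx_nonneg (v : V) : 0 ≤ ivx v := Int.ofNat_nonneg _

lemma ivx_lt (v : V) : ivx v < (Fintype.card V : ℤ) := by
  unfold ivx
  exact_mod_cast (Fintype.equivFin V v).is_lt

/-- integer label; matched partners get consecutive labels -/
noncomputable def rho (v : V) : ℤ :=
  if h : (Dset G c s v).Nonempty then
    4 * min (ivx v) (ivx h.choose) + (if ivx v < ivx h.choose then 0 else 1)
  else 4 * ivx v + 2

lemma Dset_unique (hP3 : ∀ v, (Dset G c s v).card ≤ 1) {v w w' : V} (h : w ∈ Dset G c s v) (h' : w' ∈ Dset G c s v) : w = w' :=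
  card_le_one.1 (hP3 v) w h w' h'

lemma choose_mem {v : V} (h : (Dset G c s v).Nonempty) : h.choose ∈ Dset G c s v :=
  h.choose_spec

lemma ne_of_mem_Dset {v w : V} (h : w ∈ Dset G c s v) : w ≠ v := by
  simp only [Dset, mem_filter, mem_erase] at h
  exact h.1.1

lemma rho_of_mem (hP3 : ∀ v, (Dset G c s v).card ≤ 1) {v w : V} (hw : w ∈ Dset G c s v) :
    rho G c s v = 4 * min (ivx v) (ivx w) + (if ivx v < ivx w then 0 else 1) := by
  have h : (Dset G c s v).Nonempty := ⟨w, hw⟩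
  have hc : h.choose = w := Dset_unique G c s hP3 (choose_mem G c s h) hw
  rw [rho, dif_pos h, hc]

lemma rho_pair (hP3 : ∀ v, (Dset G c s v).card ≤ 1) {v w : V} (hw : w ∈ Dset G c s v) :
    rho G c s w = rho G c s v + 1 ∨ rho G c s v = rho G c s w + 1 := by
  have h1 := rho_of_mem G c s hP3 hw
  have h2 := rho_of_mem G c s hP3 (mem_Dset_symm G c s hw)
  have hne : ivx w ≠ ivx v := fun h => (ne_of_mem_Dset G c s hw) (ivx_inj h)
  rcases lt_or_gt_of_ne hne with hlt | hlt
  · right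
    rw [h1, h2, if_neg (not_lt.2 hlt.le), if_pos hlt, min_comm (ivx w) (ivx v)]
    ring
  · left
    rw [h1, h2, if_pos hlt, if_neg (not_lt.2 hlt.le), min_comm (ivx w) (ivx v)]
    ring

lemma rho_nonneg (v : V) : 0 ≤ rho G c s v := by
  rw [rho]
  split_ifs with h h2
  · have := ivx_nonneg v; have := ivx_nonneg h.choose; omega
  · have := ivx_nonneg v; have := ivx_nonneg h.choose; omega
  · have := ivx_nonneg v; omega

lemma rho_le (v : V) : rho G c s v ≤ 4 * (Fintype.card V : ℤ) - 2 := by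
  have h1 := ivx_lt v
  rw [rho]
  split_ifs with h h2
  · have h3 : min (ivx v) (ivx h.choose) ≤ ivx v := min_le_left _ _
    omega
  · have h3 : min (ivx v) (ivx h.choose) ≤ ivx v := min_le_left _ _
    omega
  · omega

lemma rho_inj (hP3 : ∀ v, (Dset G c s v).card ≤ 1) {v w : V} (h : rho G c s v = rho G c s w) : v = w := by
  by_cases hv : (Dset G c s v).Nonempty <;> by_cases hw : (Dset G c s w).Nonempty
  · have h1 := rho_of_mem G c s hP3 (choose_mem G c s hv)
    have h2 := rho_of_mem G c s hP3 (choose_mem G c s hw)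
    set b1 := hv.choose with hb1
    set b2 := hw.choose with hb2
    have hvb1 : ivx v ≠ ivx b1 := fun he => (ne_of_mem_Dset G c s (choose_mem G c s hv)) (ivx_inj he).symm
    have hwb2 : ivx w ≠ ivx b2 := fun he => (ne_of_mem_Dset G c s (choose_mem G c s hw)) (ivx_inj he).symm
    rw [h1, h2] at h
    by_cases hlt1 : ivx v < ivx b1 <;> by_cases hlt2 : ivx w < ivx b2
    · rw [if_pos hlt1, if_pos hlt2, min_eq_left hlt1.le, min_eq_left hlt2.le] at h
      exact ivx_inj (by omega)
    · rw [if_pos hlt1, if_neg hlt2, min_eq_left hlt1.le,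
        min_eq_right (not_lt.1 hlt2)] at h
      omega
    · rw [if_neg hlt1, if_pos hlt2, min_eq_right (not_lt.1 hlt1),
        min_eq_left hlt2.le] at h
      omega
    · rw [if_neg hlt1, if_neg hlt2, min_eq_right (not_lt.1 hlt1),
        min_eq_right (not_lt.1 hlt2)] at h
      have hb : b1 = b2 := ivx_inj (by omega)
      have m1 : v ∈ Dset G c s b1 := mem_Dset_symm G c s (choose_mem G c s hv)
      have m2 : w ∈ Dset G c s b1 := by
        rw [hb]; exact mem_Dset_symm G c s (choose_mem G c s hw)
      exact Dset_unique G c s hP3 m1 m2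
  · have h1 := rho_of_mem G c s hP3 (choose_mem G c s hv)
    rw [h1, rho, dif_neg hw] at h
    split_ifs at h <;> omega
  · have h2 := rho_of_mem G c s hP3 (choose_mem G c s hw)
    rw [h2, rho, dif_neg hv] at h
    split_ifs at h <;> omega
  · rw [rho, rho, dif_neg hv, dif_neg hw] at h
    exact ivx_inj (by omega)

/-- if two vertices are both partners (same class, same side, common neighbor),
no third label lies strictly between them -/
lemma no_between (hP3 : ∀ v, (Dset G c s v).card ≤ 1) {a1 a2 t : V} (h12 : a2 ∈ Dset G c s a1)
    (hlt : rho G c s a1 < rho G c s t) (hgt : rho G c s t < rho G c s a2) : False := by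
  rcases rho_pair G c s hP3 h12 with h | h <;> omega

/-- zone bound -/
def B0 (V : Type*) [Fintype V] : ℤ := 4 * (Fintype.card V : ℤ)

/-- possibly reflected label -/
noncomputable def Rv (d : Bool) (v : V) : ℤ :=
  if d then B0 V - rho G c s v else rho G c s v

lemma Rv_nonneg (d : Bool) (v : V) : 0 ≤ Rv G c s d v := by
  have h1 := rho_nonneg G c s v
  have h2 := rho_le G c s v
  unfold Rv B0 at *
  split_ifs <;> omega

lemma Rv_le (d : Bool) (v : V) : Rv G c s d v ≤ B0 V := by
  have h1 := rho_nonneg G c s v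
  have h2 := rho_le G c s v
  unfold Rv B0 at *
  split_ifs <;> omega

lemma Rv_inj (hP3 : ∀ v, (Dset G c s v).card ≤ 1) {d : Bool} {u v : V}
    (h : Rv G c s d u = Rv G c s d v) : u = v := by
  unfold Rv at h
  split_ifs at h
  · exact rho_inj G c s hP3 (by omega)
  · exact rho_inj G c s hP3 h

/-- neighbors of `x` in class `i` on side `bb` -/
def SAB (i : Fin k) (bb : Bool) (x : V) : Finset V :=
  (G.neighborFinset x).filter fun a => c a = i ∧ s a = bb

noncomputable def loF (i : Fin k) (d : Bool) (x : V) : ℤ :=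
  if c x = i then (if s x = true then B0 V + 4 + Rv G c s d x else Rv G c s d x)
  else if h : (SAB G c s i false x).Nonempty then
    ((SAB G c s i false x).image (Rv G c s d)).min' (h.image _)
  else B0 V + 1

noncomputable def hiF (i : Fin k) (d : Bool) (x : V) : ℤ :=
  if c x = i then (if s x = true then B0 V + 4 + Rv G c s d x else Rv G c s d x)
  else if h : (SAB G c s i true x).Nonempty then
    B0 V + 4 + ((SAB G c s i true x).image (Rv G c s d)).max' (h.image _)
  else B0 V + 2

lemma lo_out_le {i : Fin k} {d : Bool} {x : V} (hx : ¬ c x = i) :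
    loF G c s i d x ≤ B0 V + 1 := by
  rw [loF, if_neg hx]
  split_ifs with h
  · have hh := h
    obtain ⟨a, ha⟩ := hh
    calc ((SAB G c s i false x).image (Rv G c s d)).min' (h.image _)
        ≤ Rv G c s d a := min'_le _ _ (mem_image_of_mem _ ha)
      _ ≤ B0 V := Rv_le G c s d a
      _ ≤ B0 V + 1 := by omega
  · omega

lemma hi_out_ge {i : Fin k} {d : Bool} {x : V} (hx : ¬ c x = i) :
    B0 V + 2 ≤ hiF G c s i d x := by
  rw [hiF, if_neg hx]
  split_ifs with h
  · have hh := h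
    obtain ⟨a, ha⟩ := hh
    have h1 : Rv G c s d a ≤ ((SAB G c s i true x).image (Rv G c s d)).max' (h.image _) :=
      le_max' _ _ (mem_image_of_mem _ ha)
    have h2 := Rv_nonneg G c s d a
    omega
  · omega

lemma lo_le_hi (i : Fin k) (d : Bool) (x : V) : loF G c s i d x ≤ hiF G c s i d x := by
  by_cases hx : c x = i
  · rw [loF, hiF, if_pos hx, if_pos hx]
  · have h1 := lo_out_le G c s (i := i) (d := d) hx
    have h2 := hi_out_ge G c s (i := i) (d := d) hx
    omega

/-- the interval graphs of the construction -/
noncomputable def JG (i : Fin k) (d : Bool) : SimpleGraph V where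
  Adj u v := u ≠ v ∧ loF G c s i d u ≤ hiF G c s i d v ∧ loF G c s i d v ≤ hiF G c s i d u
  symm := by
    constructor
    intro u v h
    exact ⟨h.1.symm, h.2.2, h.2.1⟩
  loopless := by
    constructor
    intro u h
    exact h.1 rfl

lemma JG_adj {i : Fin k} {d : Bool} {u v : V} :
    (JG G c s i d).Adj u v ↔
      u ≠ v ∧ loF G c s i d u ≤ hiF G c s i d v ∧ loF G c s i d v ≤ hiF G c s i d u :=
  Iff.rfl

section EdgeKill

lemma edge_lo_hi (hP1 : ∀ v w, w ≠ v → c w = c v → ¬G.Adj v w)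
    {u v : V} (huv : G.Adj u v) (i : Fin k) (d : Bool) :
    loF G c s i d u ≤ hiF G c s i d v := by
  by_cases hu : c u = i <;> by_cases hv : c v = i
  · exact absurd huv (hP1 u v (fun h => huv.ne h.symm) (hv.trans hu.symm))
  · by_cases hsu : s u = true
    · -- u is a B-side center, v an outsider with u among its B-neighbors
      rw [loF, if_pos hu, if_pos hsu, hiF, if_neg hv]
      have hmem : u ∈ SAB G c s i true v := by
        rw [SAB, mem_filter, G.mem_neighborFinset]
        exact ⟨huv.symm, hu, hsu⟩
      have hne : (SAB G c s i true v).Nonempty := ⟨u, hmem⟩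
      rw [dif_pos hne]
      have := le_max' ((SAB G c s i true v).image (Rv G c s d)) _
        (mem_image_of_mem (Rv G c s d) hmem)
      omega
    · rw [loF, if_pos hu, if_neg hsu]
      have h1 := Rv_le G c s d u
      have h2 := hi_out_ge G c s (i := i) (d := d) hv
      omega
  · by_cases hsv : s v = true
    · rw [hiF, if_pos hv, if_pos hsv]
      have h1 := lo_out_le G c s (i := i) (d := d) hu
      have h2 := Rv_nonneg G c s d v
      omega
    · rw [hiF, if_pos hv, if_neg hsv, loF, if_neg hu]
      have hmem : v ∈ SAB G c s i false u := by
        rw [SAB, mem_filter, G.mem_neighborFinset]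
        exact ⟨huv, hv, Bool.not_eq_true _ ▸ hsv⟩
      have hne : (SAB G c s i false u).Nonempty := ⟨v, hmem⟩
      rw [dif_pos hne]
      exact min'_le _ _ (mem_image_of_mem (Rv G c s d) hmem)
  · have h1 := lo_out_le G c s (i := i) (d := d) hu
    have h2 := hi_out_ge G c s (i := i) (d := d) hv
    omega

lemma edge_adj (hP1 : ∀ v w, w ≠ v → c w = c v → ¬G.Adj v w)
    {u v : V} (huv : G.Adj u v) (i : Fin k) (d : Bool) :
    (JG G c s i d).Adj u v :=
  ⟨huv.ne, edge_lo_hi G c s hP1 huv i d, edge_lo_hi G c s hP1 huv.symm i d⟩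

lemma exists_dir (hP3 : ∀ v, (Dset G c s v).card ≤ 1) {i : Fin k} {bb : Bool} {u v : V}
    (hnadj : ¬G.Adj u v) :
    (∀ a ∈ SAB G c s i bb v, rho G c s u < rho G c s a) ∨
    (∀ a ∈ SAB G c s i bb v, rho G c s a < rho G c s u) := by
  have hne_u : ∀ a ∈ SAB G c s i bb v, a ≠ u := by
    intro a ha hau
    rw [SAB, mem_filter, G.mem_neighborFinset] at ha
    exact hnadj (hau ▸ ha.1).symm
  by_cases hall : ∀ a ∈ SAB G c s i bb v, rho G c s u < rho G c s a
  · exact Or.inl hall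
  · right
    push_neg at hall
    obtain ⟨a1, ha1, hle⟩ := hall
    have hlt1 : rho G c s a1 < rho G c s u :=
      lt_of_le_of_ne hle fun h => (hne_u a1 ha1) (rho_inj G c s hP3 h)
    intro a2 ha2
    by_contra hge
    push_neg at hge
    have hlt2 : rho G c s u < rho G c s a2 :=
      lt_of_le_of_ne hge fun h => (hne_u a2 ha2) (rho_inj G c s hP3 h.symm)
    have hm1 := ha1
    have hm2 := ha2
    rw [SAB, mem_filter, G.mem_neighborFinset] at hm1 hm2
    have hmem : a2 ∈ Dset G c s a1 := by
      rw [Dset, mem_filter, mem_erase]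
      refine ⟨⟨fun h => absurd (h ▸ hlt1) (by omega), mem_univ _⟩,
        hm2.2.1.trans hm1.2.1.symm, hm2.2.2.trans hm1.2.2.symm,
        ⟨fun h => absurd (h ▸ hlt1) (by omega), v, hm1.1, hm2.1⟩⟩
    exact no_between G c s hP3 hmem hlt1 hlt2

lemma kill_exists (hP3 : ∀ v, (Dset G c s v).card ≤ 1) {u v : V}
    (hne : u ≠ v) (hnadj : ¬G.Adj u v) :
    ∃ (i : Fin k) (d : Bool), ¬(JG G c s i d).Adj u v := by
  by_cases hcv : c v = c u
  · by_cases hsv : s v = s u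
    · -- same class, same side : distinct point intervals
      refine ⟨c u, false, fun hadj => ?_⟩
      obtain ⟨-, h1, h2⟩ := hadj
      rw [loF, hiF, if_pos rfl, if_pos hcv, hsv] at h1 h2
      have hRv : Rv G c s false u = Rv G c s false v := by
        split_ifs at h1 h2 <;> omega
      exact hne (Rv_inj G c s hP3 hRv)
    · -- same class, opposite sides : zones are disjoint
      refine ⟨c u, false, fun hadj => ?_⟩
      obtain ⟨-, h1, h2⟩ := hadj
      rw [loF, hiF, if_pos rfl, if_pos hcv] at h1 h2
      have b1 := Rv_nonneg G c s false u
      have b2 := Rv_nonneg G c s false v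
      have b3 := Rv_le G c s false u
      have b4 := Rv_le G c s false v
      by_cases hA : s u = true <;> by_cases hB : s v = true
      · exact hsv (hB.trans hA.symm)
      · simp only [hA, hB] at h1 h2
        simp at h1 h2
        omega
      · simp only [hA, hB] at h1 h2
        simp at h1 h2
        omega
      · simp only [Bool.not_eq_true] at hA hB
        exact hsv (hB.trans hA.symm)
  · -- different classes : use u's class
    by_cases hsu : s u = true
    · -- u is a B-side center
      by_cases hSB : (SAB G c s (c u) true v).Nonempty
      · have hdir := exists_dir G c s hP3 (i := c u) (bb := true) hnadj (v := v)
        have hd : ∃ d : Bool, ∀ a ∈ SAB G c s (c u) true v,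
            Rv G c s d a < Rv G c s d u := by
          rcases hdir with hd | hd
          · refine ⟨true, fun a ha => ?_⟩
            have := hd a ha
            unfold Rv
            rw [if_pos rfl, if_pos rfl]
            omega
          · refine ⟨false, fun a ha => ?_⟩
            have := hd a ha
            unfold Rv
            rw [if_neg (by simp), if_neg (by simp)]
            exact this
        obtain ⟨d, hd⟩ := hd
        refine ⟨c u, d, fun hadj => ?_⟩
        have h1 := hadj.2.1
        rw [loF, if_pos rfl, if_pos hsu, hiF, if_neg hcv, dif_pos hSB] at h1
        have hmax : ((SAB G c s (c u) true v).image (Rv G c s d)).max' (hSB.image _)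
            < Rv G c s d u := by
          rw [max'_lt_iff]
          intro y hy
          obtain ⟨a, ha, rfl⟩ := mem_image.1 hy
          exact hd a ha
        omega
      · refine ⟨c u, false, fun hadj => ?_⟩
        have h1 := hadj.2.1
        rw [loF, if_pos rfl, if_pos hsu, hiF, if_neg hcv, dif_neg hSB] at h1
        have := Rv_nonneg G c s false u
        omega
    · -- u is an A-side center
      have hsu' : s u = false := by
        cases hu : s u
        · rfl
        · exact absurd hu hsu
      by_cases hSA : (SAB G c s (c u) false v).Nonempty
      · have hdir := exists_dir G c s hP3 (i := c u) (bb := false) hnadj (v := v)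
        have hd : ∃ d : Bool, ∀ a ∈ SAB G c s (c u) false v,
            Rv G c s d u < Rv G c s d a := by
          rcases hdir with hd | hd
          · refine ⟨false, fun a ha => ?_⟩
            have := hd a ha
            unfold Rv
            rw [if_neg (by simp), if_neg (by simp)]
            exact this
          · refine ⟨true, fun a ha => ?_⟩
            have := hd a ha
            unfold Rv
            rw [if_pos rfl, if_pos rfl]
            omega
        obtain ⟨d, hd⟩ := hd
        refine ⟨c u, d, fun hadj => ?_⟩
        have h2 := hadj.2.2
        rw [hiF, if_pos rfl, loF, if_neg hcv, dif_pos hSA] at h2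
        rw [if_neg (show ¬ s u = true by simp [hsu'])] at h2
        have hmin : Rv G c s d u
            < ((SAB G c s (c u) false v).image (Rv G c s d)).min' (hSA.image _) := by
          rw [lt_min'_iff]
          intro y hy
          obtain ⟨a, ha, rfl⟩ := mem_image.1 hy
          exact hd a ha
        omega
      · refine ⟨c u, false, fun hadj => ?_⟩
        have h2 := hadj.2.2
        rw [hiF, if_pos rfl, loF, if_neg hcv, dif_neg hSA] at h2
        rw [if_neg (show ¬ s u = true by simp [hsu'])] at h2
        have := Rv_le G c s false u
        omega

end EdgeKill

end Construction



/-- generic: a graph defined by integer intervals is an interval graph -/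
lemma interval_of_int (lo hi : V → ℤ) (hle : ∀ v, lo v ≤ hi v)
    (H : SimpleGraph V)
    (hadj : ∀ u v, H.Adj u v ↔ u ≠ v ∧ lo u ≤ hi v ∧ lo v ≤ hi u) :
    IsIntervalGraph H := by
  refine ⟨fun v => ((lo v : ℤ) : ℝ), fun v => ((hi v : ℤ) : ℝ),
    fun v => Int.cast_le.mpr (hle v), fun u v huv => ?_⟩
  rw [hadj, Set.Icc_inter_Icc, Set.nonempty_Icc]
  constructor
  · rintro ⟨-, h1, h2⟩
    exact sup_le (le_inf (Int.cast_le.mpr (hle u)) (Int.cast_le.mpr h1))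
      (le_inf (Int.cast_le.mpr h2) (Int.cast_le.mpr (hle v)))
  · intro h
    exact ⟨huv, Int.cast_le.mp (le_trans le_sup_left (h.trans inf_le_right)),
      Int.cast_le.mp (le_trans le_sup_right (h.trans inf_le_left))⟩

/-- a graph with maximum degree ≤ 1 is an interval graph -/
lemma interval_of_maxdeg_le_one (h1 : G.maxDegree ≤ 1) : IsIntervalGraph G := by
  set f : V → ℤ := fun w => ((Fintype.equivFin V w : ℕ) : ℤ) with hf
  have hinj : ∀ {x y : V}, f x = f y → x = y := by
    intro x y h
    have h2 : ((Fintype.equivFin V x : ℕ) : ℤ) = ((Fintype.equivFin V y : ℕ) : ℤ) := h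
    exact (Fintype.equivFin V).injective (Fin.val_injective (by exact_mod_cast h2))
  have hcard : ∀ v : V, (G.neighborFinset v).card ≤ 1 := by
    intro v
    have h2 := G.degree_le_maxDegree v
    rw [SimpleGraph.degree] at h2
    omega
  set gmin : V → ℤ := fun v =>
    if h : (G.neighborFinset v).Nonempty then min (f v) (f h.choose) else f v with hgmin
  have hub : ∀ {v b : V}, G.Adj v b → gmin v = min (f v) (f b) := by
    intro v b hadj
    have hb : b ∈ G.neighborFinset v := (G.mem_neighborFinset v b).2 hadj
    have hne : (G.neighborFinset v).Nonempty := ⟨b, hb⟩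
    have hch : hne.choose = b := card_le_one.1 (hcard v) _ hne.choose_spec _ hb
    rw [hgmin]
    simp only [dif_pos hne, hch]
  have key : ∀ u v : V, u ≠ v → (G.Adj u v ↔ gmin u = gmin v) := by
    intro u v huv
    constructor
    · intro hadj
      rw [hub hadj, hub hadj.symm, min_comm]
    · intro heq
      have deg2 : ∀ w : V, G.Adj w u → G.Adj w v → False := by
        intro w hwu hwv
        have hsub : ({u, v} : Finset V) ⊆ G.neighborFinset w := by
          intro z hz
          rcases mem_insert.1 hz with rfl | hz
          · exact (G.mem_neighborFinset w z).2 hwu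
          · rw [mem_singleton.1 hz]
            exact (G.mem_neighborFinset w v).2 hwv
        have hc2 : ({u, v} : Finset V).card = 2 := by
          rw [card_insert_of_notMem (by simpa using huv), card_singleton]
        have := card_le_card hsub
        have := hcard w
        omega
      rw [hgmin] at heq
      simp only [] at heq
      by_cases hu : (G.neighborFinset u).Nonempty <;>
        by_cases hv : (G.neighborFinset v).Nonempty
      · rw [dif_pos hu, dif_pos hv] at heq
        have hbu : G.Adj u hu.choose := (G.mem_neighborFinset u _).1 hu.choose_spec
        have hbv : G.Adj v hv.choose := (G.mem_neighborFinset v _).1 hv.choose_spec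
        rcases min_choice (f u) (f hu.choose) with h1' | h1' <;>
          rcases min_choice (f v) (f hv.choose) with h2' | h2'
        · exact absurd (hinj (h1' ▸ h2' ▸ heq)) huv
        · have : u = hv.choose := hinj (h1' ▸ h2' ▸ heq)
          exact (this ▸ hbv).symm
        · have : hu.choose = v := hinj (h1' ▸ h2' ▸ heq)
          exact this ▸ hbu
        · have : hu.choose = hv.choose := hinj (h1' ▸ h2' ▸ heq)
          exact absurd (deg2 hu.choose hbu.symm (this ▸ hbv.symm)) not_false
      · rw [dif_pos hu, dif_neg hv] at heq
        rcases min_choice (f u) (f hu.choose) with h1' | h1'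
        · exact absurd (hinj (h1' ▸ heq)) huv
        · have : hu.choose = v := hinj (h1' ▸ heq)
          exact this ▸ (G.mem_neighborFinset u _).1 hu.choose_spec
      · rw [dif_neg hu, dif_pos hv] at heq
        rcases min_choice (f v) (f hv.choose) with h2' | h2'
        · exact absurd (hinj (h2' ▸ heq)) huv
        · have : u = hv.choose := hinj (h2' ▸ heq)
          exact (this ▸ (G.mem_neighborFinset v _).1 hv.choose_spec).symm
      · rw [dif_neg hu, dif_neg hv] at heq
        exact absurd (hinj heq) huv
  refine ⟨fun v => ((gmin v : ℤ) : ℝ), fun v => ((gmin v : ℤ) : ℝ), fun v => le_refl _,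
    fun u v huv => ?_⟩
  rw [key u v huv, Set.Icc_self, Set.Icc_self]
  constructor
  · intro h
    exact ⟨((gmin u : ℤ) : ℝ), rfl, by rw [h]; rfl⟩
  · rintro ⟨z, hz1, hz2⟩
    simp only [Set.mem_singleton_iff] at hz1 hz2
    exact_mod_cast hz1 ▸ hz2

/-- final arithmetic -/
lemma arith_bound (D : ℕ) (hD : D ≠ 1) :
    2 * ((D ^ 2 + 3 * D) / 4 + 1) ≤ D ^ 2 + 2 := by
  match D, hD with
  | 0, _ => decide
  | 2, _ => decide
  | (e+3), _ =>
    have h3 : 3 * (e + 3) ≤ (e + 3) ^ 2 := by nlinarith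
    set x := (e + 3) ^ 2 with hx
    omega

lemma arith_klt (D : ℕ) : 4 * D + D * (D - 1) < 4 * ((D ^ 2 + 3 * D) / 4 + 1) := by
  rcases Nat.eq_zero_or_pos D with rfl | hD
  · decide
  · obtain ⟨e, rfl⟩ : ∃ e, D = e + 1 := ⟨D - 1, by omega⟩
    have h1 : (e + 1) * ((e + 1) - 1) = e * e + e := by
      rw [Nat.add_sub_cancel]; ring
    have h2 : (e + 1) ^ 2 = e * e + 2 * e + 1 := by ring
    set p := e * e with hp
    omega


end BoxicityProof

/-- Maximum-degree upper bound on boxicity: `boxicity G ≤ Δ² + 2` where `Δ` is the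
maximum degree of `G`. -/
theorem boxicity_le_max_degree_sq {V : Type*} [Fintype V] (G : SimpleGraph V)
    [DecidableRel G.Adj] :
    boxicity G ≤ G.maxDegree ^ 2 + 2 := by
  classical
  by_cases hD1 : G.maxDegree = 1
  · have hint : IsIntervalGraph G := BoxicityProof.interval_of_maxdeg_le_one G (le_of_eq hD1)
    have hmem : 1 ∈ {m : ℕ | ∃ I : Fin m → SimpleGraph V,
        (∀ k, IsIntervalGraph (I k)) ∧ G = ⨅ k, I k} := by
      refine ⟨fun _ => G, fun _ => hint, ?_⟩
      ext u v
      rw [SimpleGraph.iInf_adj]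
      exact ⟨fun h => ⟨fun _ => h, h.ne⟩, fun h => h.1 0⟩
    exact le_trans (Nat.sInf_le hmem) (le_trans one_le_two (Nat.le_add_left 2 _))
  · set D := G.maxDegree with hD
    set k := (D ^ 2 + 3 * D) / 4 + 1 with hk
    have hklt : 4 * D + D * (D - 1) < 4 * k := BoxicityProof.arith_klt D
    obtain ⟨c, s, hP1, hP3'⟩ := BoxicityProof.exists_partition G k hklt
    have hP3 : ∀ v, (BoxicityProof.Dset G c s v).card ≤ 1 := hP3'
    set m := 2 * k with hm
    set I : Fin m → SimpleGraph V := fun j =>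
      BoxicityProof.JG G c s ⟨j.val / 2, by have := j.isLt; omega⟩
        (decide (j.val % 2 = 1)) with hI
    have hmem : m ∈ {m : ℕ | ∃ I : Fin m → SimpleGraph V,
        (∀ k, IsIntervalGraph (I k)) ∧ G = ⨅ k, I k} := by
      refine ⟨I, fun j => ?_, ?_⟩
      · exact BoxicityProof.interval_of_int
          (BoxicityProof.loF G c s _ _) (BoxicityProof.hiF G c s _ _)
          (BoxicityProof.lo_le_hi G c s _ _) _ (fun u v => Iff.rfl)
      · ext u v
        rw [SimpleGraph.iInf_adj]
        constructor
        · intro h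
          exact ⟨fun j => BoxicityProof.edge_adj G c s hP1 h _ _, h.ne⟩
        · rintro ⟨hall, hne⟩
          by_contra hnadj
          obtain ⟨i, d, hkill⟩ := BoxicityProof.kill_exists G c s hP3 hne hnadj
          have hjlt : 2 * i.val + (if d then 1 else 0) < m := by
            have := i.isLt
            cases d <;> simp <;> omega
          have hIj : I ⟨2 * i.val + (if d then 1 else 0), hjlt⟩
              = BoxicityProof.JG G c s i d := by
            simp only [hI]
            congr 1
            · apply Fin.ext
              cases d <;> simp <;> omega
            · cases d <;> simp <;> omega
          exact hkill (hIj ▸ hall ⟨2 * i.val + (if d then 1 else 0), hjlt⟩)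
    calc boxicity G ≤ m := Nat.sInf_le hmem
      _ ≤ D ^ 2 + 2 := BoxicityProof.arith_bound D hD1
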